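/- Let 0 < κ < 1, w ≠ 0, μ > 0 and t > 0. Then lim_{ε→0⁺} ∫_ℝ e^{−2μtλ²}·( √(f_{κ,w}(λ√ε)/f_{κ,w}(0)) − 1 )² dλ = 0. (The mean-square convergence at the core of Theorem 3: it expresses E|U_ε(t,x) − U₀(t,x)|² → 0 for the rescaled solutions U_ε(t,x) = ε^{−1/4} u(t/ε, x/√ε) of the heat equation ∂u/∂t = μ ∂²u/∂x² with stationary Gaussian initial condition having spectral density f_{κ,w}.) -/

import Mathlib

open Real MeasureTheory Filter

noncomputable def c1 (k : ℝ) : ℝ := (2:ℝ) ^ ((1 - k)/2) / (Real.sqrt π * Real.Gamma (k/2))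

noncomputable def c2 (k : ℝ) : ℝ := 1 / (2 * Real.Gamma k * Real.cos (k * π / 2))

/-- Modified Bessel function of the second kind:
`K ν z = (1/2) ∫₀^∞ s^(ν−1) exp(−(z/2)(s + 1/s)) ds`. -/
noncomputable def besselK (ν z : ℝ) : ℝ :=
  (1/2) * ∫ s in Set.Ioi (0:ℝ), s ^ (ν - 1) * Real.exp (-(z/2) * (s + 1/s))

/-- The spectral density `f_{κ,w}` of the covariance `cos(wx)/(1+x²)^{κ/2}`. -/
noncomputable def specDen (k w lam : ℝ) : ℝ :=
  (c1 k / 2) * (besselK ((k-1)/2) |lam + w| * |lam + w| ^ ((k-1)/2)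
    + besselK ((k-1)/2) |lam - w| * |lam - w| ^ ((k-1)/2))


open Set

set_option maxHeartbeats 2000000

section Aux



lemma exp_neg_le_inv {x : ℝ} (hx : 0 < x) : Real.exp (-x) ≤ x⁻¹ := by
  rw [Real.exp_neg]
  exact inv_anti₀ hx (by linarith [Real.add_one_le_exp x])

lemma core_int {ν c : ℝ} (hν1 : -1 < ν) (hν0 : ν < 0) (hc : 0 < c) :
    IntegrableOn (fun s : ℝ => s ^ (ν - 1) * Real.exp (-(c / s))) (Set.Ioi 0) := by
  have hmeas : Measurable fun s : ℝ => s ^ (ν - 1) * Real.exp (-(c / s)) := by fun_prop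
  have h1 : IntegrableOn (fun s : ℝ => s ^ (ν - 1) * Real.exp (-(c / s))) (Set.Ioc 0 1) := by
    have hbd : IntegrableOn (fun s : ℝ => c⁻¹ * s ^ ν) (Set.Ioc 0 1) := by
      refine Integrable.const_mul ?_ _
      have := (intervalIntegral.intervalIntegrable_rpow' (a := 0) (b := 1) hν1)
      rwa [intervalIntegrable_iff_integrableOn_Ioc_of_le zero_le_one] at this
    refine Integrable.mono' hbd hmeas.aestronglyMeasurable ?_
    filter_upwards [ae_restrict_mem measurableSet_Ioc] with s hs
    obtain ⟨hs0, hs1⟩ := hs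
    rw [Real.norm_eq_abs, abs_of_nonneg (by positivity)]
    have h2 : Real.exp (-(c / s)) ≤ (c / s)⁻¹ := exp_neg_le_inv (by positivity)
    calc s ^ (ν - 1) * Real.exp (-(c / s)) ≤ s ^ (ν - 1) * (c / s)⁻¹ := by
          exact mul_le_mul_of_nonneg_left h2 (by positivity)
      _ = c⁻¹ * (s ^ (ν - 1) * s) := by
          rw [inv_div]
          ring
      _ = c⁻¹ * s ^ ν := by
          rw [← Real.rpow_add_one (ne_of_gt hs0) (ν - 1)]; norm_num
  have h2 : IntegrableOn (fun s : ℝ => s ^ (ν - 1) * Real.exp (-(c / s))) (Set.Ioi 1) := by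
    have hbd : IntegrableOn (fun s : ℝ => s ^ (ν - 1)) (Set.Ioi 1) :=
      integrableOn_Ioi_rpow_of_lt (by linarith) one_pos
    refine Integrable.mono' hbd hmeas.aestronglyMeasurable ?_
    filter_upwards [ae_restrict_mem measurableSet_Ioi] with s hs
    have hs0 : (0:ℝ) < s := lt_trans one_pos hs
    rw [Real.norm_eq_abs, abs_of_nonneg (by positivity)]
    calc s ^ (ν - 1) * Real.exp (-(c / s)) ≤ s ^ (ν - 1) * 1 := by
          refine mul_le_mul_of_nonneg_left ?_ (by positivity)
          rw [Real.exp_le_one_iff]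
          simp only [neg_nonpos]
          positivity
      _ = s ^ (ν - 1) := mul_one _
  have : Set.Ioi (0:ℝ) = Set.Ioc 0 1 ∪ Set.Ioi 1 := (Set.Ioc_union_Ioi_eq_Ioi zero_le_one).symm
  rw [this]
  exact h1.union h2

lemma besselK_integrand_meas (ν z : ℝ) :
    Measurable fun s : ℝ => s ^ (ν - 1) * Real.exp (-(z/2) * (s + 1/s)) := by fun_prop

lemma besselK_integrand_le {ν z s : ℝ} (hz : 0 < z) (hs : 0 < s) :
    s ^ (ν - 1) * Real.exp (-(z/2) * (s + 1/s)) ≤ s ^ (ν - 1) * Real.exp (-(z/2 / s)) := by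
  refine mul_le_mul_of_nonneg_left ?_ (by positivity)
  rw [Real.exp_le_exp]
  have h1 : z / 2 / s = (z/2) * (1/s) := by ring
  nlinarith [mul_pos (half_pos hz) hs]

lemma besselK_integrand_intOn {ν z : ℝ} (hν1 : -1 < ν) (hν0 : ν < 0) (hz : 0 < z) :
    IntegrableOn (fun s : ℝ => s ^ (ν - 1) * Real.exp (-(z/2) * (s + 1/s))) (Set.Ioi 0) := by
  refine Integrable.mono' (core_int hν1 hν0 (half_pos hz)) (besselK_integrand_meas ν z).aestronglyMeasurable ?_
  filter_upwards [ae_restrict_mem measurableSet_Ioi] with s hs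
  have hs' : (0:ℝ) < s := hs
  rw [Real.norm_eq_abs, abs_of_nonneg (by positivity)]
  exact besselK_integrand_le hz hs'

lemma besselK_nonneg (ν z : ℝ) : 0 ≤ besselK ν z := by
  apply mul_nonneg (by norm_num)
  apply MeasureTheory.setIntegral_nonneg measurableSet_Ioi
  intro s hs
  have : (0:ℝ) < s := hs
  positivity

lemma besselK_pos {ν z : ℝ} (hν1 : -1 < ν) (hν0 : ν < 0) (hz : 0 < z) : 0 < besselK ν z := by
  apply mul_pos (by norm_num)
  rw [setIntegral_pos_iff_support_of_nonneg_ae]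
  · rw [Set.inter_eq_self_of_subset_right]
    · simp [Real.volume_Ioi]
    · intro s hs
      have hs' : (0:ℝ) < s := hs
      simp only [Function.mem_support]
      positivity
  · filter_upwards [ae_restrict_mem measurableSet_Ioi] with s hs
    have : (0:ℝ) < s := hs
    positivity
  · exact besselK_integrand_intOn hν1 hν0 hz

noncomputable def Jc (ν : ℝ) : ℝ := ∫ s in Set.Ioi (0:ℝ), s ^ (ν - 1) * Real.exp (-((1:ℝ)/2 / s))

lemma Jc_nonneg (ν : ℝ) : 0 ≤ Jc ν := by
  apply MeasureTheory.setIntegral_nonneg measurableSet_Ioi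
  intro s hs
  have : (0:ℝ) < s := hs
  positivity

lemma scaled_integral {ν z : ℝ} (hz : 0 < z) :
    ∫ s in Set.Ioi (0:ℝ), s ^ (ν - 1) * Real.exp (-(z/2 / s)) = z ^ ν * Jc ν := by
  have key := integral_comp_mul_left_Ioi (fun s => s ^ (ν - 1) * Real.exp (-(z/2 / s))) 0 hz
  rw [mul_zero] at key
  simp only [smul_eq_mul] at key
  have congr1 : ∫ x in Set.Ioi (0:ℝ), (z * x) ^ (ν - 1) * Real.exp (-(z/2 / (z * x)))
      = z ^ (ν - 1) * Jc ν := by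
    rw [show z ^ (ν - 1) * Jc ν = ∫ x in Set.Ioi (0:ℝ), z ^ (ν - 1) * (x ^ (ν - 1) * Real.exp (-((1:ℝ)/2 / x))) from (MeasureTheory.integral_const_mul _ _).symm]
    apply setIntegral_congr_fun measurableSet_Ioi
    intro x hx
    dsimp only
    have hx' : (0:ℝ) < x := hx
    rw [Real.mul_rpow hz.le hx'.le]
    have : z / 2 / (z * x) = (1:ℝ)/2 / x := by
      field_simp
    rw [this]
    ring
  have hz' : z ≠ 0 := hz.ne'
  have key' : (∫ s in Set.Ioi (0:ℝ), s ^ (ν - 1) * Real.exp (-(z/2 / s)))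
      = z * (z ^ (ν - 1) * Jc ν) := by
    rw [← congr1, key]
    field_simp
  rw [key', show z * (z ^ (ν - 1) * Jc ν) = z ^ (ν-1) * z * Jc ν by ring,
    ← Real.rpow_add_one hz' (ν - 1)]
  norm_num

lemma besselK_le {ν z : ℝ} (hν1 : -1 < ν) (hν0 : ν < 0) (hz : 0 < z) :
    besselK ν z ≤ (1/2) * Jc ν * z ^ ν := by
  have hint2 : IntegrableOn (fun s : ℝ => s ^ (ν - 1) * Real.exp (-(z/2 / s))) (Set.Ioi 0) :=
    core_int hν1 hν0 (half_pos hz)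
  have hmono : (∫ s in Set.Ioi (0:ℝ), s ^ (ν - 1) * Real.exp (-(z/2) * (s + 1/s)))
      ≤ ∫ s in Set.Ioi (0:ℝ), s ^ (ν - 1) * Real.exp (-(z/2 / s)) := by
    apply setIntegral_mono_on (besselK_integrand_intOn hν1 hν0 hz) hint2 measurableSet_Ioi
    intro s hs
    exact besselK_integrand_le hz hs
  unfold besselK
  rw [scaled_integral hz] at hmono
  calc (1/2 : ℝ) * ∫ s in Set.Ioi (0:ℝ), s ^ (ν - 1) * Real.exp (-(z/2) * (s + 1/s))
      ≤ (1/2) * (z ^ ν * Jc ν) := by linarith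
    _ = (1/2) * Jc ν * z ^ ν := by ring

lemma besselK_measurable (ν : ℝ) : Measurable (besselK ν) := by
  unfold besselK
  apply Measurable.const_mul
  apply (MeasureTheory.StronglyMeasurable.integral_prod_right'
    (f := fun p : ℝ × ℝ => p.2 ^ (ν - 1) * Real.exp (-(p.1/2) * (p.2 + 1/p.2))) ?_).measurable
  apply Measurable.stronglyMeasurable
  fun_prop

lemma besselK_continuousAt {ν z : ℝ} (hν1 : -1 < ν) (hν0 : ν < 0) (hz : 0 < z) :
    ContinuousAt (besselK ν) z := by
  unfold besselK
  refine ContinuousAt.mul continuousAt_const ?_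
  apply continuousAt_of_dominated (bound := fun s => s ^ (ν - 1) * Real.exp (-(z/2/2) * (s + 1/s)))
  · filter_upwards with z'
    exact (besselK_integrand_meas ν z').aestronglyMeasurable
  · filter_upwards [Ioi_mem_nhds (show z/2 < z by linarith)] with z' hz'
    filter_upwards [ae_restrict_mem measurableSet_Ioi] with s hs
    have hs' : (0:ℝ) < s := hs
    rw [Real.norm_eq_abs, abs_of_nonneg (by positivity)]
    refine mul_le_mul_of_nonneg_left ?_ (by positivity)
    rw [Real.exp_le_exp]
    have h1 : 0 < s + 1/s := by positivity
    have h2 : z/2/2 ≤ z'/2 := by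
      simp only [Set.mem_Ioi] at hz'
      linarith
    nlinarith
  · exact besselK_integrand_intOn hν1 hν0 (by linarith : (0:ℝ) < z/2)
  · filter_upwards [ae_restrict_mem measurableSet_Ioi] with s hs
    exact Continuous.continuousAt (by fun_prop)





lemma c1_pos {k : ℝ} (hk0 : 0 < k) : 0 < c1 k := by
  unfold c1
  apply div_pos (Real.rpow_pos_of_pos two_pos _)
  exact mul_pos (Real.sqrt_pos.mpr Real.pi_pos) (Real.Gamma_pos_of_pos (by linarith))

lemma B_nonneg {ν z : ℝ} (hz : 0 ≤ z) : 0 ≤ besselK ν z * z ^ ν :=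
  mul_nonneg (besselK_nonneg ν z) (Real.rpow_nonneg hz ν)

lemma B_le {ν z : ℝ} (hν1 : -1 < ν) (hν0 : ν < 0) (hz : 0 ≤ z) :
    besselK ν z * z ^ ν ≤ (1/2) * Jc ν * z ^ (2*ν) := by
  rcases eq_or_lt_of_le hz with h | h
  · rw [← h, Real.zero_rpow hν0.ne, Real.zero_rpow (by linarith : 2*ν ≠ 0)]
    simp
  · calc besselK ν z * z ^ ν ≤ ((1/2) * Jc ν * z ^ ν) * z ^ ν :=
          mul_le_mul_of_nonneg_right (besselK_le hν1 hν0 h) (Real.rpow_nonneg hz ν)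
      _ = (1/2) * Jc ν * z ^ (2*ν) := by
          rw [mul_assoc, ← Real.rpow_add h]
          ring_nf

lemma specDen_nonneg {k : ℝ} (hk0 : 0 < k) (w lam : ℝ) : 0 ≤ specDen k w lam := by
  unfold specDen
  have h1 := B_nonneg (ν := (k-1)/2) (abs_nonneg (lam + w))
  have h2 := B_nonneg (ν := (k-1)/2) (abs_nonneg (lam - w))
  have := c1_pos hk0
  positivity

lemma specDen_le {k : ℝ} (hk0 : 0 < k) (hk1 : k < 1) (w lam : ℝ) :
    specDen k w lam ≤ (c1 k / 2) * ((1/2) * Jc ((k-1)/2)) *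
      (|lam + w| ^ (k-1) + |lam - w| ^ (k-1)) := by
  have hν1 : (-1:ℝ) < (k-1)/2 := by linarith
  have hν0 : (k-1)/2 < 0 := by linarith
  have e : 2 * ((k-1)/2) = k - 1 := by ring
  have h1 := B_le hν1 hν0 (abs_nonneg (lam + w))
  have h2 := B_le hν1 hν0 (abs_nonneg (lam - w))
  rw [e] at h1 h2
  unfold specDen
  have hc := (c1_pos hk0).le
  calc (c1 k / 2) * (besselK ((k-1)/2) |lam + w| * |lam + w| ^ ((k-1)/2)
        + besselK ((k-1)/2) |lam - w| * |lam - w| ^ ((k-1)/2))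
      ≤ (c1 k / 2) * ((1/2) * Jc ((k-1)/2) * |lam + w| ^ (k-1)
        + (1/2) * Jc ((k-1)/2) * |lam - w| ^ (k-1)) := by
        apply mul_le_mul_of_nonneg_left (by linarith) (by linarith)
    _ = (c1 k / 2) * ((1/2) * Jc ((k-1)/2)) * (|lam + w| ^ (k-1) + |lam - w| ^ (k-1)) := by ring

lemma specDen_measurable (k w : ℝ) : Measurable (specDen k w) := by
  unfold specDen
  apply Measurable.const_mul
  apply Measurable.add
  all_goals
    apply Measurable.mul
    · exact (besselK_measurable _).comp (by fun_prop)
    · fun_prop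

lemma specDen_continuousAt {k w lam : ℝ} (hk0 : 0 < k) (hk1 : k < 1)
    (h1 : lam + w ≠ 0) (h2 : lam - w ≠ 0) : ContinuousAt (specDen k w) lam := by
  have hν1 : (-1:ℝ) < (k-1)/2 := by linarith
  have hν0 : (k-1)/2 < 0 := by linarith
  unfold specDen
  apply ContinuousAt.mul continuousAt_const
  have hg1 : ContinuousAt (fun x : ℝ => |x + w|) lam := by fun_prop
  have hg2 : ContinuousAt (fun x : ℝ => |x - w|) lam := by fun_prop
  apply ContinuousAt.add
  · exact ContinuousAt.mul
      (ContinuousAt.comp (g := besselK ((k-1)/2)) (f := fun x : ℝ => |x + w|)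
        (besselK_continuousAt hν1 hν0 (abs_pos.mpr h1)) hg1)
      (ContinuousAt.comp (g := fun y : ℝ => y ^ ((k-1)/2)) (f := fun x : ℝ => |x + w|)
        (Real.continuousAt_rpow_const _ _ (Or.inl (abs_ne_zero.mpr h1))) hg1)
  · exact ContinuousAt.mul
      (ContinuousAt.comp (g := besselK ((k-1)/2)) (f := fun x : ℝ => |x - w|)
        (besselK_continuousAt hν1 hν0 (abs_pos.mpr h2)) hg2)
      (ContinuousAt.comp (g := fun y : ℝ => y ^ ((k-1)/2)) (f := fun x : ℝ => |x - w|)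
        (Real.continuousAt_rpow_const _ _ (Or.inl (abs_ne_zero.mpr h2))) hg2)

lemma specDen_zero_pos {k w : ℝ} (hk0 : 0 < k) (hk1 : k < 1) (hw : w ≠ 0) :
    0 < specDen k w 0 := by
  have hν1 : (-1:ℝ) < (k-1)/2 := by linarith
  have hν0 : (k-1)/2 < 0 := by linarith
  unfold specDen
  rw [zero_add, zero_sub, abs_neg]
  have hb := besselK_pos hν1 hν0 (abs_pos.mpr hw)
  have hr := Real.rpow_pos_of_pos (abs_pos.mpr hw) ((k-1)/2)
  have := c1_pos hk0
  positivity

lemma abs_rpow_intOn {p c : ℝ} (hp1 : -1 < p) :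
    IntegrableOn (fun x : ℝ => |x - c| ^ p) (Set.Icc (c-1) (c+1)) := by
  rw [integrableOn_Icc_iff_integrableOn_Ioc]
  have hsplit : Set.Ioc (c-1) c ∪ Set.Ioc c (c+1) = Set.Ioc (c-1) (c+1) :=
    Set.Ioc_union_Ioc_eq_Ioc (by linarith) (by linarith)
  rw [← hsplit]
  apply IntegrableOn.union
  · -- left piece : |x - c| = c - x
    have base : IntervalIntegrable (fun x : ℝ => x ^ p) volume 0 1 :=
      intervalIntegral.intervalIntegrable_rpow' hp1
    have comp : IntervalIntegrable (fun x : ℝ => (c - x) ^ p) volume (c - 0) (c - 1) :=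
      base.comp_sub_left c
    rw [sub_zero] at comp
    have comp' := comp.symm
    rw [intervalIntegrable_iff_integrableOn_Ioc_of_le (by linarith)] at comp'
    apply comp'.congr_fun ?_ measurableSet_Ioc
    intro x hx
    dsimp only
    rw [abs_sub_comm, abs_of_nonneg (by linarith [hx.2] : (0:ℝ) ≤ c - x)]
  · have base : IntervalIntegrable (fun x : ℝ => x ^ p) volume 0 1 :=
      intervalIntegral.intervalIntegrable_rpow' hp1
    have comp : IntervalIntegrable (fun x : ℝ => (x - c) ^ p) volume (0 + c) (1 + c) :=
      base.comp_sub_right c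
    rw [zero_add, add_comm] at comp
    rw [intervalIntegrable_iff_integrableOn_Ioc_of_le (by linarith)] at comp
    apply comp.congr_fun ?_ measurableSet_Ioc
    intro x hx
    dsimp only
    rw [abs_of_nonneg (by linarith [hx.1] : (0:ℝ) ≤ x - c)]

lemma integrable_gauss_rpow {a p : ℝ} (ha : 0 < a) (hp1 : -1 < p) (hp0 : p < 0) (c : ℝ) :
    Integrable (fun x : ℝ => Real.exp (-a * x^2) * |x - c| ^ p) := by
  have hbound : Integrable (fun x : ℝ => Real.exp (-a * x^2)
      + (Set.Icc (c-1) (c+1)).indicator (fun x : ℝ => |x - c| ^ p) x) :=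
    (integrable_exp_neg_mul_sq ha).add ((abs_rpow_intOn hp1).integrable_indicator measurableSet_Icc)
  refine Integrable.mono' hbound
    (Measurable.aestronglyMeasurable (by fun_prop)) ?_
  filter_upwards with x
  rw [Real.norm_eq_abs, abs_of_nonneg (by positivity)]
  rcases le_or_gt |x - c| 1 with h | h
  · have hx : x ∈ Set.Icc (c-1) (c+1) := by
      rw [Set.mem_Icc]
      constructor <;> [linarith [abs_le.mp h |>.1]; linarith [abs_le.mp h |>.2]]
    rw [Set.indicator_of_mem hx]
    have h1 : Real.exp (-a * x^2) * |x - c| ^ p ≤ 1 * |x - c| ^ p := by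
      apply mul_le_mul_of_nonneg_right _ (Real.rpow_nonneg (abs_nonneg _) _)
      rw [Real.exp_le_one_iff]
      nlinarith [sq_nonneg x]
    rw [one_mul] at h1
    have h2 : (0:ℝ) ≤ Real.exp (-a * x^2) := (Real.exp_pos _).le
    linarith
  · have h1 : |x - c| ^ p ≤ 1 := Real.rpow_le_one_of_one_le_of_nonpos h.le hp0.le
    have h2 : Real.exp (-a * x^2) * |x - c| ^ p ≤ Real.exp (-a * x^2) * 1 :=
      mul_le_mul_of_nonneg_left h1 (Real.exp_pos _).le
    have h3 : (0:ℝ) ≤ (Set.Icc (c-1) (c+1)).indicator (fun x : ℝ => |x - c| ^ p) x :=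
      Set.indicator_nonneg (fun y _ => Real.rpow_nonneg (abs_nonneg _) _) x
    rw [mul_one] at h2
    linarith

lemma integrable_H {k w a : ℝ} (hk0 : 0 < k) (hk1 : k < 1) (ha : 0 < a) :
    Integrable (fun x : ℝ => Real.exp (-a * x^2) * specDen k w x) := by
  set CC := (c1 k / 2) * ((1/2) * Jc ((k-1)/2)) with hCC
  have hCCpos : 0 ≤ CC := by
    have := (c1_pos hk0).le
    have := Jc_nonneg ((k-1)/2)
    positivity
  have g1 : Integrable (fun x : ℝ => Real.exp (-a * x^2) * |x + w| ^ (k-1)) := by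
    have := integrable_gauss_rpow ha (by linarith : (-1:ℝ) < k-1) (by linarith) (-w)
    simpa [sub_neg_eq_add] using this
  have g2 : Integrable (fun x : ℝ => Real.exp (-a * x^2) * |x - w| ^ (k-1)) :=
    integrable_gauss_rpow ha (by linarith) (by linarith) w
  have hbound : Integrable (fun x : ℝ => CC * (Real.exp (-a * x^2) * |x + w| ^ (k-1)
      + Real.exp (-a * x^2) * |x - w| ^ (k-1))) := ((g1.add g2).const_mul CC)
  refine Integrable.mono' hbound ?_ ?_
  · exact ((Real.continuous_exp.comp (by fun_prop)).measurable.mul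
      (specDen_measurable k w)).aestronglyMeasurable
  · filter_upwards with x
    rw [Real.norm_eq_abs, abs_of_nonneg (mul_nonneg (Real.exp_pos _).le (specDen_nonneg hk0 w x))]
    calc Real.exp (-a * x^2) * specDen k w x
        ≤ Real.exp (-a * x^2) * (CC * (|x + w| ^ (k-1) + |x - w| ^ (k-1))) :=
          mul_le_mul_of_nonneg_left (specDen_le hk0 hk1 w x) (Real.exp_pos _).le
      _ = CC * (Real.exp (-a * x^2) * |x + w| ^ (k-1)
          + Real.exp (-a * x^2) * |x - w| ^ (k-1)) := by ring

end Aux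

theorem heat_mean_square_convergence (k w μ t : ℝ)
    (hk0 : 0 < k) (hk1 : k < 1) (hw : w ≠ 0) (hμ : 0 < μ) (ht : 0 < t) :
    Filter.Tendsto
      (fun ε : ℝ => ∫ lam : ℝ, Real.exp (-2*μ*t*lam^2) *
        (Real.sqrt (specDen k w (lam * Real.sqrt ε) / specDen k w 0) - 1)^2)
      (nhdsWithin 0 (Set.Ioi 0)) (nhds 0) := by
  have hν1 : (-1:ℝ) < (k-1)/2 := by linarith
  have hν0 : (k-1)/2 < 0 := by linarith
  set a : ℝ := 2*μ*t with ha_def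
  have ha : 0 < a := by positivity
  set f0 : ℝ := specDen k w 0 with hf0_def
  have hf0 : 0 < f0 := specDen_zero_pos hk0 hk1 hw
  set r : ℝ := |w|/2 with hr_def
  have habs : 0 < |w| := abs_pos.mpr hw
  have hr : 0 < r := by rw [hr_def]; positivity
  have hexp : ∀ lam : ℝ, -2*μ*t*lam^2 = -a*lam^2 := fun lam => by rw [ha_def]; ring
  simp only [hexp]
  -- continuity on compact gives bound M
  have hcont : ContinuousOn (specDen k w) (Set.Icc (-r) r) := by
    intro x hx
    have hxr : |x| ≤ r := abs_le.mpr ⟨hx.1, hx.2⟩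
    have h1 : x + w ≠ 0 := by
      intro h
      have hx' : x = -w := by linarith [eq_neg_of_add_eq_zero_left h]
      rw [hx', abs_neg, hr_def] at hxr
      linarith
    have h2 : x - w ≠ 0 := by
      intro h
      have hx' : x = w := sub_eq_zero.mp h
      rw [hx', hr_def] at hxr
      linarith
    exact (specDen_continuousAt hk0 hk1 h1 h2).continuousWithinAt
  obtain ⟨M, hM⟩ := (isCompact_Icc (a := -r) (b := r)).exists_bound_of_continuousOn hcont
  have hMb : ∀ x ∈ Set.Icc (-r) r, specDen k w x ≤ M := by
    intro x hx
    have := hM x hx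
    rw [Real.norm_eq_abs] at this
    exact (le_abs_self _).trans this
  have hM0 : 0 ≤ M := by
    have h0 : (0:ℝ) ∈ Set.Icc (-r) r := by constructor <;> linarith
    exact le_trans (norm_nonneg _) (hM 0 h0)
  set H : ℝ → ℝ := fun x => Real.exp (-a*x^2) * specDen k w x with hH_def
  have hH : Integrable H := integrable_H hk0 hk1 ha
  set I : ℝ := ∫ x, H x with hI_def
  have gauss2 : Integrable (fun x : ℝ => Real.exp (-(a/2)*x^2)) :=
    integrable_exp_neg_mul_sq (half_pos ha)
  set K2 : ℝ := ∫ x : ℝ, Real.exp (-(a/2)*x^2) with hK2_def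
  set C₀ : ℝ := M/f0 + 1 with hC0_def
  have hC0 : 0 ≤ C₀ := by rw [hC0_def]; positivity
  set cE : ℝ → ℝ := fun ε => Real.exp (-(a*r^2/2)/ε) with hcE_def
  set φ : ℝ → ℝ → ℝ := fun ε lam => Real.exp (-a*lam^2) *
    (Real.sqrt (specDen k w (lam * Real.sqrt ε) / f0) - 1)^2 with hφ_def
  set Eset : ℝ → Set ℝ := fun ε => {lam : ℝ | |lam| * Real.sqrt ε ≤ r} with hE_def
  have hEmeas : ∀ ε : ℝ, MeasurableSet (Eset ε) := by
    intro ε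
    have he : Eset ε = (fun lam : ℝ => |lam| * Real.sqrt ε) ⁻¹' (Set.Iic r) := rfl
    rw [he]
    exact (by fun_prop : Measurable fun lam : ℝ => |lam| * Real.sqrt ε) measurableSet_Iic
  set θ : ℝ → ℝ → ℝ := fun ε => (Eset ε).indicator (φ ε) with hθ_def
  set ρb : ℝ → ℝ → ℝ := fun ε lam => cE ε * ((f0)⁻¹ * H (lam * Real.sqrt ε)
    + Real.exp (-(a/2)*lam^2)) with hρ_def
  have hφ_nonneg : ∀ ε lam, 0 ≤ φ ε lam := by
    intro ε lam
    simp only [hφ_def]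
    positivity
  have hφ_meas : ∀ ε : ℝ, Measurable (φ ε) := by
    intro ε
    simp only [hφ_def]
    apply Measurable.mul (by fun_prop)
    apply Measurable.pow _ measurable_const
    apply Measurable.sub _ measurable_const
    exact Real.continuous_sqrt.measurable.comp
      (((specDen_measurable k w).comp (measurable_id.mul_const _)).div_const _)
  have hsqrt_ineq : ∀ x : ℝ, 0 ≤ x → (Real.sqrt x - 1)^2 ≤ x + 1 := by
    intro x hx
    nlinarith [Real.sq_sqrt hx, Real.sqrt_nonneg x]
  have hθ_nonneg : ∀ ε lam, 0 ≤ θ ε lam := fun ε lam =>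
    Set.indicator_nonneg (fun y _ => hφ_nonneg ε y) lam
  have hρ_nonneg : ∀ ε lam, 0 ≤ ρb ε lam := by
    intro ε lam
    simp only [hρ_def, hH_def]
    have h1 := specDen_nonneg hk0 w (lam * Real.sqrt ε)
    positivity
  have hθ_le : ∀ ε : ℝ, ∀ lam, θ ε lam ≤ C₀ * Real.exp (-a*lam^2) := by
    intro ε lam
    simp only [hθ_def]
    by_cases hmem : lam ∈ Eset ε
    · rw [Set.indicator_of_mem hmem]
      have hin : lam * Real.sqrt ε ∈ Set.Icc (-r) r := by
        rw [Set.mem_Icc, ← abs_le, abs_mul, abs_of_nonneg (Real.sqrt_nonneg ε)]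
        exact hmem
      have hfle := hMb _ hin
      have hfx := specDen_nonneg hk0 w (lam * Real.sqrt ε)
      have h1 : (Real.sqrt (specDen k w (lam * Real.sqrt ε) / f0) - 1)^2 ≤ M/f0 + 1 := by
        refine le_trans (hsqrt_ineq _ (by positivity)) ?_
        have hd : specDen k w (lam * Real.sqrt ε) / f0 ≤ M / f0 := by gcongr
        linarith
      calc φ ε lam ≤ Real.exp (-a*lam^2) * (M/f0+1) := by
            simp only [hφ_def]
            exact mul_le_mul_of_nonneg_left h1 (Real.exp_pos _).le
        _ = C₀ * Real.exp (-a*lam^2) := by rw [hC0_def]; ring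
    · rw [Set.indicator_of_notMem hmem]
      positivity
  have hθ_meas : ∀ ε : ℝ, AEStronglyMeasurable (θ ε) volume := by
    intro ε
    simp only [hθ_def]
    exact ((hφ_meas ε).indicator (hEmeas ε)).aestronglyMeasurable
  have hgaussC : Integrable (fun lam : ℝ => C₀ * Real.exp (-a*lam^2)) :=
    (integrable_exp_neg_mul_sq ha).const_mul C₀
  have hθ_int : ∀ ε : ℝ, Integrable (θ ε) := by
    intro ε
    refine Integrable.mono' hgaussC (hθ_meas ε) ?_
    filter_upwards with lam
    rw [Real.norm_eq_abs, abs_of_nonneg (hθ_nonneg ε lam)]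
    exact hθ_le ε lam
  have hρ_int : ∀ ε : ℝ, 0 < ε → Integrable (ρb ε) := by
    intro ε hε
    have hs : Real.sqrt ε ≠ 0 := (Real.sqrt_pos.mpr hε).ne'
    simp only [hρ_def]
    exact (((hH.comp_mul_right' hs).const_mul _).add gauss2).const_mul _
  -- pointwise domination for 0 < ε ≤ 1/2
  have hdom : ∀ ε : ℝ, 0 < ε → ε ≤ 1/2 → ∀ lam, φ ε lam ≤ θ ε lam + ρb ε lam := by
    intro ε hε hε2 lam
    by_cases hmem : lam ∈ Eset ε
    · simp only [hθ_def]
      rw [Set.indicator_of_mem hmem]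
      linarith [hρ_nonneg ε lam]
    · simp only [hθ_def]
      rw [Set.indicator_of_notMem hmem]
      rw [zero_add]
      have hgt : r < |lam| * Real.sqrt ε := not_le.mp hmem
      have hx2 : (lam * Real.sqrt ε)^2 = lam^2 * ε := by
        rw [mul_pow, Real.sq_sqrt hε.le]
      have hlam2 : r^2/ε < lam^2 := by
        have hsq : r^2 < (|lam| * Real.sqrt ε)^2 := by
          nlinarith [hr, abs_nonneg lam, Real.sqrt_nonneg ε]
        rw [mul_pow, sq_abs, Real.sq_sqrt hε.le] at hsq
        rw [div_lt_iff₀ hε]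
        linarith
      set fx : ℝ := specDen k w (lam * Real.sqrt ε) with hfx_def
      have hfx : 0 ≤ fx := specDen_nonneg hk0 w (lam * Real.sqrt ε)
      have e1 : Real.exp (-a*lam^2) ≤ cE ε * Real.exp (-a*(lam^2*ε)) := by
        simp only [hcE_def]
        rw [← Real.exp_add, Real.exp_le_exp]
        rw [show -(a*r^2/2)/ε = -((a/2)*(r^2/ε)) by ring]
        nlinarith [mul_le_mul_of_nonneg_left hlam2.le (by linarith : (0:ℝ) ≤ a/2),
          mul_nonneg (mul_nonneg ha.le (sq_nonneg lam)) (by linarith : (0:ℝ) ≤ 1/2 - ε),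
          sq_nonneg lam]
      have e2 : Real.exp (-a*lam^2) ≤ cE ε * Real.exp (-(a/2)*lam^2) := by
        simp only [hcE_def]
        rw [← Real.exp_add, Real.exp_le_exp]
        rw [show -(a*r^2/2)/ε = -((a/2)*(r^2/ε)) by ring]
        nlinarith [mul_le_mul_of_nonneg_left hlam2.le (by linarith : (0:ℝ) ≤ a/2)]
      have hcE_pos : 0 < cE ε := by simp only [hcE_def]; exact Real.exp_pos _
      calc φ ε lam ≤ Real.exp (-a*lam^2) * (fx/f0 + 1) := by
            simp only [hφ_def, ← hfx_def]
            exact mul_le_mul_of_nonneg_left (hsqrt_ineq _ (by positivity)) (Real.exp_pos _).le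
        _ = Real.exp (-a*lam^2) * fx * f0⁻¹ + Real.exp (-a*lam^2) := by ring
        _ ≤ (cE ε * Real.exp (-a*(lam^2*ε))) * fx * f0⁻¹ + cE ε * Real.exp (-(a/2)*lam^2) := by
            refine add_le_add ?_ e2
            refine mul_le_mul_of_nonneg_right (mul_le_mul_of_nonneg_right e1 hfx) ?_
            positivity
        _ = ρb ε lam := by
            simp only [hρ_def, hH_def, hx2, ← hfx_def]
            ring
  -- eventual inequality for the integral
  have hmain : ∀ ε : ℝ, 0 < ε → ε ≤ 1/2 →
      (∫ lam : ℝ, φ ε lam) ≤ (∫ lam, θ ε lam) + ∫ lam, ρb ε lam := by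
    intro ε hε hε2
    have hint : Integrable (fun lam => θ ε lam + ρb ε lam) := (hθ_int ε).add (hρ_int ε hε)
    have hle : (∫ lam : ℝ, φ ε lam) ≤ ∫ lam, (θ ε lam + ρb ε lam) := by
      apply integral_mono_of_nonneg
      · filter_upwards with lam
        exact hφ_nonneg ε lam
      · exact hint
      · filter_upwards with lam
        exact hdom ε hε hε2 lam
    rwa [integral_add (hθ_int ε) (hρ_int ε hε)] at hle
  -- value of ∫ ρb
  have hρ_val : ∀ ε : ℝ, 0 < ε →
      (∫ lam, ρb ε lam) = cE ε * (f0⁻¹ * ((Real.sqrt ε)⁻¹ * I) + K2) := by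
    intro ε hε
    have hs : 0 < Real.sqrt ε := Real.sqrt_pos.mpr hε
    simp only [hρ_def]
    rw [MeasureTheory.integral_const_mul]
    congr 1
    rw [integral_add ((hH.comp_mul_right' hs.ne').const_mul _) gauss2]
    congr 1
    rw [MeasureTheory.integral_const_mul]
    congr 1
    have := Measure.integral_comp_mul_right H (Real.sqrt ε)
    rw [this, smul_eq_mul, abs_of_nonneg (inv_nonneg.mpr hs.le)]
  -- the squeeze
  set G : ℝ → ℝ := fun ε => (∫ lam, θ ε lam) + cE ε * (f0⁻¹ * ((Real.sqrt ε)⁻¹ * I) + K2)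
    with hG_def
  have hF_nonneg : ∀ᶠ ε in nhdsWithin 0 (Set.Ioi 0), 0 ≤ ∫ lam, φ ε lam := by
    filter_upwards with ε
    exact integral_nonneg (fun lam => hφ_nonneg ε lam)
  have hFG : ∀ᶠ ε in nhdsWithin 0 (Set.Ioi 0), (∫ lam, φ ε lam) ≤ G ε := by
    filter_upwards [Ioo_mem_nhdsGT (by norm_num : (0:ℝ) < 1/2)] with ε hε
    have h1 := hmain ε hε.1 hε.2.le
    rw [hG_def]
    rw [hρ_val ε hε.1] at h1
    exact h1
  -- tendsto of G
  have hG_tendsto : Tendsto G (nhdsWithin 0 (Set.Ioi 0)) (nhds 0) := by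
    have hinv : Tendsto (fun ε : ℝ => ε⁻¹) (nhdsWithin 0 (Set.Ioi 0)) atTop :=
      tendsto_inv_nhdsGT_zero
    have hb : 0 < a*r^2/2 := by positivity
    have hcE0 : Tendsto cE (nhdsWithin 0 (Set.Ioi 0)) (nhds 0) := by
      have h1 : Tendsto (fun ε : ℝ => -(a*r^2/2)/ε) (nhdsWithin 0 (Set.Ioi 0)) atBot := by
        simp only [div_eq_mul_inv, neg_mul]
        exact tendsto_neg_atTop_atBot.comp (hinv.const_mul_atTop hb)
      simpa only [hcE_def, Function.comp_def] using Real.tendsto_exp_atBot.comp h1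
    have hcE1 : Tendsto (fun ε : ℝ => cE ε * (Real.sqrt ε)⁻¹)
        (nhdsWithin 0 (Set.Ioi 0)) (nhds 0) := by
      have base := tendsto_rpow_mul_exp_neg_mul_atTop_nhds_zero (1/2) (a*r^2/2) hb
      have comp := base.comp hinv
      apply comp.congr'
      filter_upwards [self_mem_nhdsWithin] with ε hε
      have hε' : (0:ℝ) < ε := hε
      simp only [Function.comp_apply]
      rw [← Real.sqrt_eq_rpow, Real.sqrt_inv,
        show -(a*r^2/2) * ε⁻¹ = -(a*r^2/2)/ε by ring]
      simp only [hcE_def]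
      ring
    have hθ_tendsto : Tendsto (fun ε => ∫ lam, θ ε lam) (nhdsWithin 0 (Set.Ioi 0)) (nhds 0) := by
      have hlim : ∀ lam : ℝ, Tendsto (fun ε => θ ε lam) (nhdsWithin 0 (Set.Ioi 0)) (nhds 0) := by
        intro lam
        have hδ : (0:ℝ) < (r/(|lam|+1))^2 := by positivity
        have hev : ∀ᶠ ε in nhdsWithin 0 (Set.Ioi 0), θ ε lam = φ ε lam := by
          filter_upwards [Ioo_mem_nhdsGT hδ] with ε hε
          have hε0 : 0 < ε := hε.1
          have hsl : Real.sqrt ε < r/(|lam|+1) := by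
            have h := Real.sqrt_lt_sqrt hε0.le hε.2
            rwa [Real.sqrt_sq (by positivity : (0:ℝ) ≤ r/(|lam|+1))] at h
          have hmem : lam ∈ Eset ε := by
            simp only [hE_def, Set.mem_setOf_eq]
            have hlt : |lam| * Real.sqrt ε < r := by
              calc |lam| * Real.sqrt ε ≤ (|lam|+1) * Real.sqrt ε :=
                    mul_le_mul_of_nonneg_right (by linarith) (Real.sqrt_nonneg _)
                _ < (|lam|+1) * (r/(|lam|+1)) :=
                    mul_lt_mul_of_pos_left hsl (by positivity)
                _ = r := by field_simp
            exact hlt.le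
          simp only [hθ_def]
          rw [Set.indicator_of_mem hmem]
        have hφt : Tendsto (fun ε => φ ε lam) (nhdsWithin 0 (Set.Ioi 0)) (nhds 0) := by
          have h1 : Tendsto (fun ε : ℝ => lam * Real.sqrt ε)
              (nhdsWithin 0 (Set.Ioi 0)) (nhds 0) := by
            have hs : Tendsto Real.sqrt (nhdsWithin 0 (Set.Ioi 0)) (nhds 0) := by
              have h := Real.continuous_sqrt.tendsto 0
              rw [Real.sqrt_zero] at h
              exact h.mono_left nhdsWithin_le_nhds
            have h := hs.const_mul lam
            simpa using h
          have h2 : ContinuousAt (specDen k w) 0 := by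
            apply specDen_continuousAt hk0 hk1
            · simpa using hw
            · simpa using hw
          have h3 : Tendsto (fun ε => specDen k w (lam * Real.sqrt ε))
              (nhdsWithin 0 (Set.Ioi 0)) (nhds f0) := by
            have h := h2.tendsto.comp h1
            simpa [hf0_def, Function.comp_def] using h
          have h4 : ContinuousAt
              (fun y : ℝ => Real.exp (-a*lam^2) * (Real.sqrt (y / f0) - 1)^2) f0 := by
            apply ContinuousAt.mul continuousAt_const
            apply ContinuousAt.pow
            apply ContinuousAt.sub _ continuousAt_const
            exact ContinuousAt.comp (g := Real.sqrt) Real.continuous_sqrt.continuousAt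
              ((continuousAt_id).div_const _)
          have h5 := h4.tendsto.comp h3
          simp only [Function.comp_def] at h5
          rw [div_self hf0.ne', Real.sqrt_one, sub_self] at h5
          norm_num at h5
          simp only [hφ_def, neg_mul]
          exact h5
        exact hφt.congr' (hev.mono fun ε h => h.symm)
      have hDCT := MeasureTheory.tendsto_integral_filter_of_dominated_convergence
        (F := θ) (f := fun _ : ℝ => (0:ℝ)) (bound := fun lam => C₀ * Real.exp (-a*lam^2))
        (l := nhdsWithin 0 (Set.Ioi 0))
        (by filter_upwards with ε; exact hθ_meas ε)
        (by
          filter_upwards with ε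
          filter_upwards with lam
          rw [Real.norm_eq_abs, abs_of_nonneg (hθ_nonneg ε lam)]
          exact hθ_le ε lam)
        hgaussC
        (by filter_upwards with lam; exact hlim lam)
      rwa [integral_zero] at hDCT
    have hsecond : Tendsto (fun ε => cE ε * (f0⁻¹ * ((Real.sqrt ε)⁻¹ * I) + K2))
        (nhdsWithin 0 (Set.Ioi 0)) (nhds 0) := by
      have h := (hcE1.const_mul (f0⁻¹ * I)).add (hcE0.const_mul K2)
      rw [mul_zero, mul_zero, add_zero] at h
      apply h.congr
      intro ε
      ring
    have hfinal := hθ_tendsto.add hsecond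
    rw [add_zero] at hfinal
    exact hfinal
  have := squeeze_zero' hF_nonneg hFG hG_tendsto
  exact this
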